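/- Let n ≥ 1 and let A, B ∈ ℂ^{n×n}. For t ∈ ℝ sufficiently small, the matrices I − tA/2, I − tB/2 and I + P(t) are invertible, where P(t) = Cay(tA)·Cay(tB), and the matrix Ω(t) = 2(P(t) − I)(I + P(t))^{-1} satisfies Cay(Ω(t)) = P(t). Moreover, as t → 0, Ω(t) − [ t(A + B) + (t²/2)[A,B] − (t³/4)(ABA + BAB) ] = O(t⁴), i.e. there exist C₀, δ > 0 such that the norm of this difference is at most C₀|t|⁴ for |t| < δ. (BCH-formula for the Cayley transform.) -/

import Mathlib

open scoped Matrix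

attribute [local instance] Matrix.frobeniusNormedAddCommGroup Matrix.frobeniusNormedSpace
  Matrix.frobeniusNormedRing

private lemma cayley_aux_unit {n : ℕ} (X : Matrix (Fin n) (Fin n) ℂ) (h : ‖X‖ ≤ 1/2) :
    IsUnit (1 - X) ∧ ‖(1 - X)⁻¹‖ ≤ 2 * ‖(1 : Matrix (Fin n) (Fin n) ℂ)‖ := by
  haveI : CompleteSpace (Matrix (Fin n) (Fin n) ℂ) := FiniteDimensional.complete ℂ _
  have h1 : ‖X‖ < 1 := lt_of_le_of_lt h (by norm_num)
  have hu : IsUnit (1 - X) := isUnit_one_sub_of_norm_lt_one h1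
  refine ⟨hu, ?_⟩
  have hd : IsUnit (1 - X).det := (Matrix.isUnit_iff_isUnit_det _).mp hu
  have hm : (1 - X) * (1 - X)⁻¹ = 1 := Matrix.mul_nonsing_inv _ hd
  rw [sub_mul, one_mul] at hm
  have key : (1 - X)⁻¹ = 1 + X * (1 - X)⁻¹ := by
    rwa [sub_eq_iff_eq_add] at hm
  have hb : ‖(1 - X)⁻¹‖ ≤ ‖(1 : Matrix (Fin n) (Fin n) ℂ)‖ + ‖X‖ * ‖(1 - X)⁻¹‖ := by
    calc ‖(1 - X)⁻¹‖ = ‖1 + X * (1 - X)⁻¹‖ := by rw [← key]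
    _ ≤ ‖(1 : Matrix (Fin n) (Fin n) ℂ)‖ + ‖X * (1 - X)⁻¹‖ := norm_add_le _ _
    _ ≤ _ := by gcongr; exact norm_mul_le _ _
  have h0 : (0:ℝ) ≤ ‖(1 - X)⁻¹‖ := norm_nonneg _
  nlinarith

set_option maxHeartbeats 1000000 in
private lemma cayley_poly1 {n : ℕ} (A B : Matrix (Fin n) (Fin n) ℂ) (c : ℂ) :
    (1 - c • A) * (1 - c • B) + (1 + c • A) * (1 + c • B)
      = (2:ℂ) • (1 + c^2 • (A*B)) := by
  simp only [mul_add, add_mul, sub_mul, mul_sub, mul_one, one_mul,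
    smul_mul_assoc, mul_smul_comm, smul_smul, smul_add, smul_sub]
  module

set_option maxHeartbeats 1000000 in
private lemma cayley_poly2 {n : ℕ} (A B : Matrix (Fin n) (Fin n) ℂ) (c : ℂ) :
    (1 + c • A) * (1 + c • B) - (1 - c • A) * (1 - c • B)
      = (c + c) • (A + B) := by
  simp only [mul_add, add_mul, sub_mul, mul_sub, mul_one, one_mul,
    smul_mul_assoc, mul_smul_comm, smul_smul, smul_add, smul_sub]
  module

set_option maxHeartbeats 1000000 in
private lemma cayley_commV {n : ℕ} (B : Matrix (Fin n) (Fin n) ℂ) (c : ℂ) :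
    (1 + c • B) * (1 - c • B) = (1 - c • B) * (1 + c • B) := by
  simp only [mul_add, add_mul, sub_mul, mul_sub, mul_one, one_mul,
    smul_mul_assoc, mul_smul_comm, smul_smul, smul_add, smul_sub]
  module

set_option maxHeartbeats 1000000 in
private lemma cayley_poly3 {n : ℕ} (A B : Matrix (Fin n) (Fin n) ℂ) (c : ℂ) :
    (A+B) * (1 - c • A) - c^2 • (((A+B)*(A*B)) * (1 - c • A))
      - (1 - c • A) * ((A+B) + c • (A*B - B*A) - c^2 • (A*B*A + B*A*B))
      = c^3 • ((((A+B)*(A*B)) * A) - A * (A*B*A + B*A*B)) := by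
  simp only [mul_add, add_mul, sub_mul, mul_sub, mul_one, one_mul,
    smul_mul_assoc, mul_smul_comm, smul_smul, smul_add, smul_sub, mul_assoc]
  module

set_option maxHeartbeats 4000000 in
/-- BCH-formula for a product of two Cayley transforms, up to order four. -/
theorem cayley_BCH_two
    (n : ℕ) (hn : 1 ≤ n)
    (A B : Matrix (Fin n) (Fin n) ℂ)
    (P Ωf : ℝ → Matrix (Fin n) (Fin n) ℂ)
    (hP : ∀ t : ℝ, P t =
      (1 - ((t:ℂ)/2) • A)⁻¹ * (1 + ((t:ℂ)/2) • A) *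
      ((1 - ((t:ℂ)/2) • B)⁻¹ * (1 + ((t:ℂ)/2) • B)))
    (hΩ : ∀ t : ℝ, Ωf t = (2:ℂ) • ((P t - 1) * (1 + P t)⁻¹)) :
    ∃ δ > 0,
      (∀ t : ℝ, |t| < δ →
        IsUnit (1 - ((t:ℂ)/2) • A) ∧ IsUnit (1 - ((t:ℂ)/2) • B) ∧
        IsUnit (1 + P t) ∧
        (1 - (1/2 : ℂ) • Ωf t)⁻¹ * (1 + (1/2 : ℂ) • Ωf t) = P t) ∧
      ∃ C₀ > 0, ∀ t : ℝ, |t| < δ →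
        ‖Ωf t - ((t:ℂ) • (A + B)
          + ((t:ℂ)^2/2) • (A*B - B*A)
          - ((t:ℂ)^3/4) • (A*B*A + B*A*B))‖
          ≤ C₀ * |t|^4 := by
  have he0 : 0 ≤ ‖(1 : Matrix (Fin n) (Fin n) ℂ)‖ := norm_nonneg _
  set e : ℝ := ‖(1 : Matrix (Fin n) (Fin n) ℂ)‖ with he
  set δ : ℝ := (1 + ‖A‖ + ‖B‖)⁻¹ with hδdef
  have hδpos : 0 < δ := by rw [hδdef]; positivity
  set C₀ : ℝ := 1 + 2*e*(‖((A+B)*(A*B)) * A - A * (A*B*A + B*A*B)‖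
      + ‖((A+B)*(A*B))‖ * ‖A*B‖ * (2*e) * (e+1)) with hC₀def
  have hC₀pos : 0 < C₀ := by
    rw [hC₀def]
    have h1 : (0:ℝ) ≤ ‖((A+B)*(A*B)) * A - A * (A*B*A + B*A*B)‖ := norm_nonneg _
    have h2 : (0:ℝ) ≤ ‖((A+B)*(A*B))‖ := norm_nonneg _
    have h3 : (0:ℝ) ≤ ‖A*B‖ := norm_nonneg _
    have hs1 : (0:ℝ) ≤ ‖((A+B)*(A*B))‖ * ‖A*B‖ * (2*e) * (e+1) :=
      mul_nonneg (mul_nonneg (mul_nonneg h2 h3) (by linarith)) (by linarith)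
    have hs2 : (0:ℝ) ≤ e * (‖((A+B)*(A*B)) * A - A * (A*B*A + B*A*B)‖
        + ‖((A+B)*(A*B))‖ * ‖A*B‖ * (2*e) * (e+1)) :=
      mul_nonneg he0 (by linarith)
    linarith
  have key : ∀ t : ℝ, |t| < δ →
      (IsUnit (1 - ((t:ℂ)/2) • A) ∧ IsUnit (1 - ((t:ℂ)/2) • B) ∧
        IsUnit (1 + P t) ∧
        (1 - (1/2 : ℂ) • Ωf t)⁻¹ * (1 + (1/2 : ℂ) • Ωf t) = P t) ∧
      ‖Ωf t - ((t:ℂ) • (A + B) + ((t:ℂ)^2/2) • (A*B - B*A) - ((t:ℂ)^3/4) • (A*B*A + B*A*B))‖ ≤ C₀ * |t|^4 := by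
    intro t ht
    have hPt := hP t
    have hΩt := hΩ t
    have habs : 0 ≤ |t| := abs_nonneg t
    have ht1 : |t| ≤ 1 := by
      have hle : δ ≤ 1 := by
        rw [hδdef, inv_le_one_iff₀]
        right; nlinarith [norm_nonneg A, norm_nonneg B]
      linarith
    have htab : |t| * (1 + ‖A‖ + ‖B‖) < 1 := by
      rw [hδdef] at ht
      calc |t| * (1 + ‖A‖ + ‖B‖) < (1 + ‖A‖ + ‖B‖)⁻¹ * (1 + ‖A‖ + ‖B‖) := by
            apply mul_lt_mul_of_pos_right ht; positivity
      _ = 1 := by field_simp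
    have hta : |t| * ‖A‖ ≤ 1 := by nlinarith [norm_nonneg A, norm_nonneg B]
    have htb : |t| * ‖B‖ ≤ 1 := by nlinarith [norm_nonneg A, norm_nonneg B]
    set c : ℂ := ((t:ℂ)/2) with hc
    have hcn : ‖c‖ = |t|/2 := by
      rw [hc, norm_div, Complex.norm_real, Real.norm_eq_abs, Complex.norm_ofNat]
    -- the three units
    obtain ⟨hU, hUn⟩ := cayley_aux_unit (c • A) (by
      rw [norm_smul, hcn]; nlinarith [norm_nonneg A])
    obtain ⟨hV, hVn⟩ := cayley_aux_unit (c • B) (by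
      rw [norm_smul, hcn]; nlinarith [norm_nonneg B])
    obtain ⟨hS, hSn⟩ := cayley_aux_unit (-(c^2 • (A*B))) (by
      rw [norm_neg, norm_smul, norm_pow, hcn]
      have hab : ‖A*B‖ ≤ ‖A‖ * ‖B‖ := norm_mul_le _ _
      have h4 : (|t| * ‖A‖) * (|t| * ‖B‖) ≤ 1 :=
        mul_le_one₀ hta (by positivity) htb
      have h5 : (|t|/2)^2 * ‖A*B‖ ≤ (|t|/2)^2 * (‖A‖*‖B‖) := by
        apply mul_le_mul_of_nonneg_left hab; positivity
      nlinarith)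
    rw [sub_neg_eq_add] at hS hSn
    -- cancellation facts
    have hUl : (1 - c • A)⁻¹ * (1 - c • A) = 1 :=
      Matrix.nonsing_inv_mul _ ((Matrix.isUnit_iff_isUnit_det _).mp hU)
    have hUr : (1 - c • A) * (1 - c • A)⁻¹ = 1 :=
      Matrix.mul_nonsing_inv _ ((Matrix.isUnit_iff_isUnit_det _).mp hU)
    have hVl : (1 - c • B)⁻¹ * (1 - c • B) = 1 :=
      Matrix.nonsing_inv_mul _ ((Matrix.isUnit_iff_isUnit_det _).mp hV)
    have hVr : (1 - c • B) * (1 - c • B)⁻¹ = 1 :=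
      Matrix.mul_nonsing_inv _ ((Matrix.isUnit_iff_isUnit_det _).mp hV)
    have hSr : (1 + c^2 • (A*B)) * (1 + c^2 • (A*B))⁻¹ = 1 :=
      Matrix.mul_nonsing_inv _ ((Matrix.isUnit_iff_isUnit_det _).mp hS)
    have hVl' : ∀ X : Matrix (Fin n) (Fin n) ℂ, (1 - c • B)⁻¹ * ((1 - c • B) * X) = X := fun X => by
      rw [← mul_assoc, hVl, one_mul]
    -- commutation of V⁻¹ and V'
    have hVV' : (1 - c • B)⁻¹ * (1 + c • B) = (1 + c • B) * (1 - c • B)⁻¹ := by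
      calc (1 - c • B)⁻¹ * (1 + c • B) = (1 - c • B)⁻¹ * (1 + c • B) * ((1 - c • B) * (1 - c • B)⁻¹) := by rw [hVr, mul_one]
      _ = (1 - c • B)⁻¹ * ((1 + c • B) * (1 - c • B)) * (1 - c • B)⁻¹ := by noncomm_ring
      _ = (1 - c • B)⁻¹ * ((1 - c • B) * (1 + c • B)) * (1 - c • B)⁻¹ := by rw [cayley_commV B c]
      _ = ((1 - c • B)⁻¹ * (1 - c • B)) * ((1 + c • B) * (1 - c • B)⁻¹) := by noncomm_ring
      _ = (1 + c • B) * (1 - c • B)⁻¹ := by rw [hVl, one_mul]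
    rw [hVV'] at hPt
    -- hPt : P t = U⁻¹ * U' * (V' * V⁻¹)
    have hone : (1 - c • A)⁻¹ * ((1 - c • A) * (1 - c • B)) * (1 - c • B)⁻¹ = 1 := by
      calc (1 - c • A)⁻¹ * ((1 - c • A) * (1 - c • B)) * (1 - c • B)⁻¹ = ((1 - c • A)⁻¹ * (1 - c • A)) * ((1 - c • B) * (1 - c • B)⁻¹) := by noncomm_ring
      _ = 1 := by rw [hUl, hVr, one_mul]
    have hpoly2 : (1 + c • A) * (1 + c • B) - (1 - c • A) * (1 - c • B) = (t:ℂ) • (A + B) := by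
      rw [cayley_poly2 A B c, hc]
      norm_num
    have hP1 : 1 + P t = (1 - c • A)⁻¹ * ((2:ℂ) • (1 + c^2 • (A*B))) * (1 - c • B)⁻¹ := by
      rw [hPt]
      have expand : (1 - c • A)⁻¹ * ((2:ℂ) • (1 + c^2 • (A*B))) * (1 - c • B)⁻¹
          = (1 - c • A)⁻¹ * ((1 - c • A) * (1 - c • B)) * (1 - c • B)⁻¹ + (1 - c • A)⁻¹ * ((1 + c • A) * (1 + c • B)) * (1 - c • B)⁻¹ := by
        rw [← cayley_poly1 A B c]; noncomm_ring
      rw [expand, hone]; noncomm_ring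
    have hPm1 : P t - 1 = (1 - c • A)⁻¹ * ((t:ℂ) • (A + B)) * (1 - c • B)⁻¹ := by
      rw [hPt]
      have expand : (1 - c • A)⁻¹ * ((t:ℂ) • (A + B)) * (1 - c • B)⁻¹
          = (1 - c • A)⁻¹ * ((1 + c • A) * (1 + c • B)) * (1 - c • B)⁻¹ - (1 - c • A)⁻¹ * ((1 - c • A) * (1 - c • B)) * (1 - c • B)⁻¹ := by
        rw [← hpoly2]; noncomm_ring
      rw [expand, hone]; noncomm_ring
    have hSSinv : ((2:ℂ) • (1 + c^2 • (A*B))) * ((2⁻¹:ℂ) • (1 + c^2 • (A*B))⁻¹) = 1 := by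
      rw [smul_mul_assoc, mul_smul_comm, smul_smul, hSr]
      norm_num
    have hprod : ((1 - c • A)⁻¹ * ((2:ℂ) • (1 + c^2 • (A*B))) * (1 - c • B)⁻¹) * ((1 - c • B) * ((2⁻¹:ℂ) • (1 + c^2 • (A*B))⁻¹) * (1 - c • A)) = 1 := by
      calc ((1 - c • A)⁻¹ * ((2:ℂ) • (1 + c^2 • (A*B))) * (1 - c • B)⁻¹) * ((1 - c • B) * ((2⁻¹:ℂ) • (1 + c^2 • (A*B))⁻¹) * (1 - c • A))
          = (1 - c • A)⁻¹ * (((2:ℂ) • (1 + c^2 • (A*B))) * (((1 - c • B)⁻¹ * (1 - c • B)) * (((2⁻¹:ℂ) • (1 + c^2 • (A*B))⁻¹) * (1 - c • A)))) := by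
            noncomm_ring
        _ = (1 - c • A)⁻¹ * (((2:ℂ) • (1 + c^2 • (A*B))) * ((2⁻¹:ℂ) • (1 + c^2 • (A*B))⁻¹) * (1 - c • A)) := by
            rw [hVl, one_mul]; noncomm_ring
        _ = (1 - c • A)⁻¹ * (1 - c • A) := by rw [hSSinv, one_mul]
        _ = 1 := hUl
    have hQ : IsUnit (1 + P t) := by
      rw [hP1]; exact (Matrix.isUnit_iff_isUnit_det _).mpr (Matrix.isUnit_det_of_right_inverse hprod)
    have hQl : (1 + P t)⁻¹ * (1 + P t) = 1 :=
      Matrix.nonsing_inv_mul _ ((Matrix.isUnit_iff_isUnit_det _).mp hQ)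
    have hQr : (1 + P t) * (1 + P t)⁻¹ = 1 :=
      Matrix.mul_nonsing_inv _ ((Matrix.isUnit_iff_isUnit_det _).mp hQ)
    have hW : (1 + P t)⁻¹ = (1 - c • B) * ((2⁻¹:ℂ) • (1 + c^2 • (A*B))⁻¹) * (1 - c • A) := by
      apply Matrix.inv_eq_right_inv
      rw [hP1]; exact hprod
    -- explicit formula for Ωf t
    have hΩf : Ωf t = (t:ℂ) • ((1 - c • A)⁻¹ * ((A+B) * ((1 + c^2 • (A*B))⁻¹ * (1 - c • A)))) := by
      rw [hΩt, hW, hPm1]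
      simp only [smul_mul_assoc, mul_smul_comm, mul_assoc, smul_smul, hVl']
      module
    -- Part 1 : the Cayley identity
    have hΩhalf : (1/2 : ℂ) • Ωf t = (P t - 1) * (1 + P t)⁻¹ := by
      rw [hΩt, smul_smul]; norm_num
    have hcommP : (1 + P t) * P t = P t * (1 + P t) := by noncomm_ring
    have hPW : P t * (1 + P t)⁻¹ = (1 + P t)⁻¹ * P t := by
      calc P t * (1 + P t)⁻¹
          = ((1 + P t)⁻¹ * (1 + P t)) * (P t * (1 + P t)⁻¹) := by rw [hQl, one_mul]
        _ = (1 + P t)⁻¹ * ((1 + P t) * P t) * (1 + P t)⁻¹ := by noncomm_ring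
        _ = (1 + P t)⁻¹ * (P t * (1 + P t)) * (1 + P t)⁻¹ := by rw [hcommP]
        _ = ((1 + P t)⁻¹ * P t) * ((1 + P t) * (1 + P t)⁻¹) := by noncomm_ring
        _ = (1 + P t)⁻¹ * P t := by rw [hQr, mul_one]
    have h2smul1 : (1 + P t) - (P t - 1) = (2:ℂ) • (1 : Matrix (Fin n) (Fin n) ℂ) := by
      module
    have h2smulP : (1 + P t) + (P t - 1) = (2:ℂ) • (P t) := by module
    have h1mΩ : 1 - (1/2 : ℂ) • Ωf t = (2:ℂ) • (1 + P t)⁻¹ := by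
      rw [hΩhalf]
      calc 1 - (P t - 1) * (1 + P t)⁻¹
          = (1 + P t) * (1 + P t)⁻¹ - (P t - 1) * (1 + P t)⁻¹ := by rw [hQr]
        _ = ((1 + P t) - (P t - 1)) * (1 + P t)⁻¹ := (sub_mul _ _ _).symm
        _ = (2:ℂ) • (1 + P t)⁻¹ := by rw [h2smul1, smul_mul_assoc, one_mul]
    have h1pΩ : 1 + (1/2 : ℂ) • Ωf t = (2:ℂ) • (P t * (1 + P t)⁻¹) := by
      rw [hΩhalf]
      calc 1 + (P t - 1) * (1 + P t)⁻¹
          = (1 + P t) * (1 + P t)⁻¹ + (P t - 1) * (1 + P t)⁻¹ := by rw [hQr]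
        _ = ((1 + P t) + (P t - 1)) * (1 + P t)⁻¹ := (add_mul _ _ _).symm
        _ = (2:ℂ) • (P t * (1 + P t)⁻¹) := by rw [h2smulP, smul_mul_assoc]
    have hYunit : IsUnit (1 - (1/2 : ℂ) • Ωf t) := by
      rw [h1mΩ]
      refine (Matrix.isUnit_iff_isUnit_det _).mpr (Matrix.isUnit_det_of_right_inverse (B := (2⁻¹:ℂ) • (1 + P t)) ?_)
      rw [smul_mul_assoc, mul_smul_comm, smul_smul, hQl]
      norm_num
    have hYP : (1 - (1/2 : ℂ) • Ωf t) * P t = 1 + (1/2 : ℂ) • Ωf t := by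
      rw [h1mΩ, h1pΩ, smul_mul_assoc, ← hPW]
    have hcayley : (1 - (1/2 : ℂ) • Ωf t)⁻¹ * (1 + (1/2 : ℂ) • Ωf t) = P t := by
      rw [← hYP, ← mul_assoc,
        Matrix.nonsing_inv_mul _ ((Matrix.isUnit_iff_isUnit_det _).mp hYunit), one_mul]
    -- Part 2 : the estimate
    have hSsub : (1 + c^2 • (A*B))⁻¹ = 1 - c^2 • ((A*B) * (1 + c^2 • (A*B))⁻¹) := by
      have h := hSr
      rw [add_mul, one_mul, smul_mul_assoc] at h
      rw [eq_sub_iff_add_eq]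
      exact h
    have step1 : (1 + c^2 • (A*B))⁻¹ * (1 - c • A) = (1 - c • A) - c^2 • ((A*B) * ((1 + c^2 • (A*B))⁻¹ * (1 - c • A))) := by
      conv_lhs => rw [hSsub]
      rw [sub_mul, one_mul, smul_mul_assoc, mul_assoc]
    have e1 : (A+B) * ((1 + c^2 • (A*B))⁻¹ * (1 - c • A))
        = (A+B) * (1 - c • A) - c^2 • (((A+B)*(A*B)) * ((1 + c^2 • (A*B))⁻¹ * (1 - c • A))) := by
      conv_lhs => rw [step1]
      rw [mul_sub, mul_smul_comm, ← mul_assoc]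
    have e2 : ((A+B)*(A*B)) * ((1 + c^2 • (A*B))⁻¹ * (1 - c • A))
        = ((A+B)*(A*B)) * (1 - c • A) - c^2 • (((A+B)*(A*B)) * ((A*B) * ((1 + c^2 • (A*B))⁻¹ * (1 - c • A)))) := by
      conv_lhs => rw [step1]
      rw [mul_sub, mul_smul_comm]
    have e3 : (A+B) * ((1 + c^2 • (A*B))⁻¹ * (1 - c • A))
        = (A+B) * (1 - c • A) - c^2 • (((A+B)*(A*B)) * (1 - c • A)) + c^4 • (((A+B)*(A*B)) * ((A*B) * ((1 + c^2 • (A*B))⁻¹ * (1 - c • A)))) := by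
      rw [e1, e2]; module
    have hbracket : ((A+B) * (1 - c • A) - c^2 • (((A+B)*(A*B)) * (1 - c • A)) + c^4 • (((A+B)*(A*B)) * ((A*B) * ((1 + c^2 • (A*B))⁻¹ * (1 - c • A))))) - (1 - c • A) * ((A+B) + c • (A*B - B*A) - c^2 • (A*B*A + B*A*B))
        = c^3 • (((A+B)*(A*B)) * A - A * (A*B*A + B*A*B)) + c^4 • (((A+B)*(A*B)) * ((A*B) * ((1 + c^2 • (A*B))⁻¹ * (1 - c • A)))) := by
      rw [← cayley_poly3 A B c]; abel
    have hT : (t:ℂ) • ((1 - c • A)⁻¹ * ((1 - c • A) * ((A+B) + c • (A*B - B*A) - c^2 • (A*B*A + B*A*B)))) = ((t:ℂ) • (A + B) + ((t:ℂ)^2/2) • (A*B - B*A) - ((t:ℂ)^3/4) • (A*B*A + B*A*B)) := by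
      rw [← mul_assoc, hUl, one_mul, hc]
      match_scalars <;> ring
    have hDiff : Ωf t - ((t:ℂ) • (A + B) + ((t:ℂ)^2/2) • (A*B - B*A) - ((t:ℂ)^3/4) • (A*B*A + B*A*B)) = (t:ℂ) • ((1 - c • A)⁻¹ * (c^3 • (((A+B)*(A*B)) * A - A * (A*B*A + B*A*B)) + c^4 • (((A+B)*(A*B)) * ((A*B) * ((1 + c^2 • (A*B))⁻¹ * (1 - c • A)))))) := by
      rw [hΩf, e3, ← hT, ← smul_sub, ← mul_sub, hbracket]
    -- norm estimates
    have hUn' : ‖(1 - c • A)‖ ≤ e + 1 := by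
      calc ‖(1 - c • A)‖ ≤ ‖(1 : Matrix (Fin n) (Fin n) ℂ)‖ + ‖c • A‖ := norm_sub_le _ _
      _ ≤ e + 1 := by rw [norm_smul, hcn, ← he]; nlinarith [norm_nonneg A]
    have hNG : ‖(((A+B)*(A*B)) * ((A*B) * ((1 + c^2 • (A*B))⁻¹ * (1 - c • A))))‖ ≤ ‖((A+B)*(A*B))‖ * ‖A*B‖ * (2*e) * (e+1) := by
      calc ‖(((A+B)*(A*B)) * ((A*B) * ((1 + c^2 • (A*B))⁻¹ * (1 - c • A))))‖ ≤ ‖((A+B)*(A*B))‖ * ‖(A*B) * ((1 + c^2 • (A*B))⁻¹ * (1 - c • A))‖ := norm_mul_le _ _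
        _ ≤ ‖((A+B)*(A*B))‖ * (‖A*B‖ * ‖((1 + c^2 • (A*B))⁻¹ * (1 - c • A))‖) := by
            gcongr; exact norm_mul_le _ _
        _ ≤ ‖((A+B)*(A*B))‖ * (‖A*B‖ * (‖(1 + c^2 • (A*B))⁻¹‖ * ‖(1 - c • A)‖)) := by
            gcongr; exact norm_mul_le _ _
        _ ≤ ‖((A+B)*(A*B))‖ * (‖A*B‖ * ((2*e) * (e+1))) := by gcongr
        _ = ‖((A+B)*(A*B))‖ * ‖A*B‖ * (2*e) * (e+1) := by ring
    have hK10 : (0:ℝ) ≤ ‖(((A+B)*(A*B)) * A - A * (A*B*A + B*A*B))‖ := norm_nonneg _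
    have hK20 : (0:ℝ) ≤ ‖((A+B)*(A*B))‖ * ‖A*B‖ * (2*e) * (e+1) := by positivity
    have hZn : ‖(c^3 • (((A+B)*(A*B)) * A - A * (A*B*A + B*A*B)) + c^4 • (((A+B)*(A*B)) * ((A*B) * ((1 + c^2 • (A*B))⁻¹ * (1 - c • A)))))‖ ≤ (|t|/2)^3 * ‖(((A+B)*(A*B)) * A - A * (A*B*A + B*A*B))‖ + (|t|/2)^4 * (‖((A+B)*(A*B))‖ * ‖A*B‖ * (2*e) * (e+1)) := by
      calc ‖(c^3 • (((A+B)*(A*B)) * A - A * (A*B*A + B*A*B)) + c^4 • (((A+B)*(A*B)) * ((A*B) * ((1 + c^2 • (A*B))⁻¹ * (1 - c • A)))))‖ ≤ ‖c^3 • (((A+B)*(A*B)) * A - A * (A*B*A + B*A*B))‖ + ‖c^4 • (((A+B)*(A*B)) * ((A*B) * ((1 + c^2 • (A*B))⁻¹ * (1 - c • A))))‖ := norm_add_le _ _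
        _ ≤ (|t|/2)^3 * ‖(((A+B)*(A*B)) * A - A * (A*B*A + B*A*B))‖ + (|t|/2)^4 * (‖((A+B)*(A*B))‖ * ‖A*B‖ * (2*e) * (e+1)) := by
            rw [norm_smul, norm_smul, norm_pow, norm_pow, hcn]
            gcongr
    have h1 : ‖(1 - c • A)⁻¹ * (c^3 • (((A+B)*(A*B)) * A - A * (A*B*A + B*A*B)) + c^4 • (((A+B)*(A*B)) * ((A*B) * ((1 + c^2 • (A*B))⁻¹ * (1 - c • A)))))‖
        ≤ (2*e) * ((|t|/2)^3 * ‖(((A+B)*(A*B)) * A - A * (A*B*A + B*A*B))‖ + (|t|/2)^4 * (‖((A+B)*(A*B))‖ * ‖A*B‖ * (2*e) * (e+1))) := by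
      calc ‖(1 - c • A)⁻¹ * (c^3 • (((A+B)*(A*B)) * A - A * (A*B*A + B*A*B)) + c^4 • (((A+B)*(A*B)) * ((A*B) * ((1 + c^2 • (A*B))⁻¹ * (1 - c • A)))))‖ ≤ ‖(1 - c • A)⁻¹‖ * ‖(c^3 • (((A+B)*(A*B)) * A - A * (A*B*A + B*A*B)) + c^4 • (((A+B)*(A*B)) * ((A*B) * ((1 + c^2 • (A*B))⁻¹ * (1 - c • A)))))‖ := norm_mul_le _ _
        _ ≤ (2*e) * ((|t|/2)^3 * ‖(((A+B)*(A*B)) * A - A * (A*B*A + B*A*B))‖ + (|t|/2)^4 * (‖((A+B)*(A*B))‖ * ‖A*B‖ * (2*e) * (e+1))) := by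
            apply mul_le_mul hUn hZn (norm_nonneg _) (by positivity)
    have hbound : ‖Ωf t - ((t:ℂ) • (A + B) + ((t:ℂ)^2/2) • (A*B - B*A) - ((t:ℂ)^3/4) • (A*B*A + B*A*B))‖ ≤ C₀ * |t|^4 := by
      rw [hDiff, norm_smul, Complex.norm_real, Real.norm_eq_abs]
      calc |t| * ‖(1 - c • A)⁻¹ * (c^3 • (((A+B)*(A*B)) * A - A * (A*B*A + B*A*B)) + c^4 • (((A+B)*(A*B)) * ((A*B) * ((1 + c^2 • (A*B))⁻¹ * (1 - c • A)))))‖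
          ≤ |t| * ((2*e) * ((|t|/2)^3 * ‖(((A+B)*(A*B)) * A - A * (A*B*A + B*A*B))‖
              + (|t|/2)^4 * (‖((A+B)*(A*B))‖ * ‖A*B‖ * (2*e) * (e+1)))) :=
            mul_le_mul_of_nonneg_left h1 habs
        _ ≤ |t| * ((2*e) * (|t|^3 * (‖(((A+B)*(A*B)) * A - A * (A*B*A + B*A*B))‖
              + ‖((A+B)*(A*B))‖ * ‖A*B‖ * (2*e) * (e+1)))) := by
            have h2 : (|t|/2)^3 ≤ |t|^3 := by
              rw [div_pow]
              have h5 := pow_nonneg habs 3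
              norm_num
              linarith
            have h3 : (|t|/2)^4 ≤ |t|^3 := by
              rw [div_pow]
              have h5 : |t|^4 ≤ |t|^3 := pow_le_pow_of_le_one habs ht1 (by norm_num)
              have h6 := pow_nonneg habs 4
              norm_num
              linarith
            have hw1 := mul_le_mul_of_nonneg_right h2 hK10
            have hw2 := mul_le_mul_of_nonneg_right h3 hK20
            have hW : (|t|/2)^3 * ‖(((A+B)*(A*B)) * A - A * (A*B*A + B*A*B))‖
                + (|t|/2)^4 * (‖((A+B)*(A*B))‖ * ‖A*B‖ * (2*e) * (e+1))
                ≤ |t|^3 * (‖(((A+B)*(A*B)) * A - A * (A*B*A + B*A*B))‖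
                  + ‖((A+B)*(A*B))‖ * ‖A*B‖ * (2*e) * (e+1)) := by
              nlinarith [hw1, hw2]
            gcongr
        _ = (2*e*(‖(((A+B)*(A*B)) * A - A * (A*B*A + B*A*B))‖
              + ‖((A+B)*(A*B))‖ * ‖A*B‖ * (2*e) * (e+1))) * |t|^4 := by ring
        _ ≤ C₀ * |t|^4 := by
            rw [hC₀def]
            have h7 := pow_nonneg habs 4
            apply mul_le_mul_of_nonneg_right ?_ h7
            linarith
    exact ⟨⟨hU, hV, hQ, hcayley⟩, hbound⟩
  exact ⟨δ, hδpos, fun t ht => (key t ht).1, C₀, hC₀pos, fun t ht => (key t ht).2⟩
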